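/- Let m > 1 be an integer with 3 ∤ m and m ≡ 2 (mod 4), let E'_m be the elliptic curve over ℚ defined by y² = x³ + x - m⁶, and let P' = (m², m) and Q' = (m⁶, m⁹) be rational points on E'_m. Then neither P' nor Q' lies in 2E'_m(ℚ); i.e., both are nontrivial in E'_m(ℚ)/2E'_m(ℚ). -/

import Mathlib

/-- The elliptic curve `E'_m : y² = x³ + x - m⁶` over `ℚ`. -/
def Em' (m : ℤ) : WeierstrassCurve ℚ := ⟨0, 0, 0, 1, -(m : ℚ) ^ 6⟩

/-- The doubling map `P ↦ 2 • P` as an additive group homomorphism; its range is the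
subgroup `2A` of `A`. -/
def doublingHom (A : Type*) [AddCommGroup A] : A →+ A :=
  AddMonoidHom.mk' (fun a => 2 • a) (fun a b => smul_add 2 a b)


lemma quartic_rat_root_int (c₃ c₂ c₁ c₀ : ℤ) (x : ℚ)
    (h : x ^ 4 + (c₃ : ℚ) * x ^ 3 + (c₂ : ℚ) * x ^ 2 + (c₁ : ℚ) * x + (c₀ : ℚ) = 0) :
    ∃ n : ℤ, (n : ℚ) = x := by
  set a : ℤ := x.num with ha
  set b : ℤ := (x.den : ℤ) with hb
  have hbpos : 0 < b := by rw [hb]; exact_mod_cast x.pos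
  have hb0 : (b : ℚ) ≠ 0 := by exact_mod_cast hbpos.ne'
  have hab : (a : ℚ) = x * (b : ℚ) := by
    rw [ha, hb]
    push_cast
    have hden : ((x.den : ℚ)) ≠ 0 := Nat.cast_ne_zero.mpr x.den_nz
    exact (div_eq_iff hden).mp (Rat.num_div_den x)
  have hZQ : (a : ℚ) ^ 4 + (c₃ : ℚ) * a ^ 3 * b + (c₂ : ℚ) * a ^ 2 * b ^ 2
      + (c₁ : ℚ) * a * b ^ 3 + (c₀ : ℚ) * b ^ 4 = 0 := by
    linear_combination (b : ℚ) ^ 4 * h +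
      ((a : ℚ) ^ 3 + (a : ℚ) ^ 2 * x * b + (a : ℚ) * x ^ 2 * b ^ 2 + x ^ 3 * b ^ 3
        + (c₃ : ℚ) * b * ((a : ℚ) ^ 2 + (a : ℚ) * x * b + x ^ 2 * b ^ 2)
        + (c₂ : ℚ) * b ^ 2 * ((a : ℚ) + x * b) + (c₁ : ℚ) * b ^ 3) * hab
  have hZ : a ^ 4 + c₃ * a ^ 3 * b + c₂ * a ^ 2 * b ^ 2 + c₁ * a * b ^ 3 + c₀ * b ^ 4 = 0 := by
    exact_mod_cast hZQ
  have hdvd : b ∣ a ^ 4 :=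
    ⟨-(c₃ * a ^ 3 + c₂ * a ^ 2 * b + c₁ * a * b ^ 2 + c₀ * b ^ 3), by linarith [hZ]⟩
  have hcop : IsCoprime b a := by
    rw [Int.isCoprime_iff_gcd_eq_one, Int.gcd, ha, hb]
    simpa [Int.natAbs_natCast, Nat.coprime_comm] using x.reduced
  have hunit : IsUnit b := (hcop.pow_right (n := 4)).isUnit_of_dvd hdvd
  have hb1 : x.den = 1 := by
    rcases Int.isUnit_iff.mp hunit with h1 | h1 <;> omega
  exact ⟨a, by rw [ha]; exact Rat.coe_int_num_of_den_eq_one hb1⟩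


/-- No integer root of the quartic coming from halving `P' = (m², m)`. -/
lemma no_int_root_P (m : ℤ) (h4 : m % 4 = 2) (n : ℤ)
    (hZ : n ^ 4 - 4 * m ^ 2 * n ^ 3 - 2 * n ^ 2 + (8 * m ^ 6 - 4 * m ^ 2) * n
      + (1 + 4 * m ^ 8) = 0) : False := by
  obtain ⟨u, hu, huo⟩ : ∃ u : ℤ, m = 2 * u ∧ u % 2 = 1 := ⟨m / 2, by omega, by omega⟩
  subst hu
  -- n is odd
  have hodd : n % 2 = 1 := by
    rcases Int.emod_two_eq_zero_or_one n with h | h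
    · exfalso
      obtain ⟨k, hk⟩ : ∃ k : ℤ, n = 2 * k := ⟨n / 2, by omega⟩
      subst hk
      have h1 : (1 : ℤ) = 2 * (-(8 * k ^ 4) + 64 * u ^ 2 * k ^ 3 + 4 * k ^ 2
          - 512 * u ^ 6 * k + 16 * u ^ 2 * k - 512 * u ^ 8) := by
        linear_combination hZ
      omega
    · exact h
  obtain ⟨k, hk⟩ : ∃ k : ℤ, n = 2 * k + 1 := ⟨n / 2, by omega⟩
  subst hk
  obtain ⟨c, hc⟩ : ∃ c : ℤ, k * (k + 1) = c + c := Int.even_mul_succ_self k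
  -- key equality: odd = even
  have key : 32 * (u ^ 2 * (2 * k + 1) * (4 * c + 1))
      = 32 * (2 * (c ^ 2 + 8 * u ^ 6 * (2 * k + 1) + 16 * u ^ 8)) := by
    linear_combination (-1) * hZ +
      (16 * k ^ 2 + 16 * k + 32 * c - 64 * u ^ 2 * (2 * k + 1)) * hc
  have key' : u ^ 2 * (2 * k + 1) * (4 * c + 1)
      = 2 * (c ^ 2 + 8 * u ^ 6 * (2 * k + 1) + 16 * u ^ 8) :=
    mul_left_cancel₀ (by norm_num) key
  have ho : Odd (u ^ 2 * (2 * k + 1) * (4 * c + 1)) := by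
    refine (Odd.mul (Odd.mul ?_ ⟨k, by ring⟩) ⟨2 * c, by ring⟩)
    exact Odd.pow ⟨(u - 1) / 2, by omega⟩
  rw [key'] at ho
  obtain ⟨j, hj⟩ := ho
  omega

/-- No integer root of the quartic coming from halving `Q' = (m⁶, m⁹)`. -/
lemma no_int_root_Q (m : ℤ) (hm : 1 < m) (n : ℤ)
    (hZ : n ^ 4 - 4 * m ^ 6 * n ^ 3 - 2 * n ^ 2 + 4 * m ^ 6 * n + (1 + 4 * m ^ 12) = 0) :
    False := by
  set N : ℤ := n ^ 2 - 1 - 2 * m ^ 6 * n with hNdef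
  have hN : N ^ 2 = (2 * m ^ 6) ^ 2 * (n ^ 2 - 1) := by
    rw [hNdef]; linear_combination hZ
  have hdvd : 2 * m ^ 6 ∣ N := by
    have h2 : (2 * m ^ 6) ^ 2 ∣ N ^ 2 := ⟨n ^ 2 - 1, hN⟩
    exact (Int.pow_dvd_pow_iff (two_ne_zero)).mp h2
  obtain ⟨t, ht⟩ := hdvd
  have hm0 : (2 * m ^ 6) ^ 2 ≠ 0 := by positivity
  have ht2 : t ^ 2 = n ^ 2 - 1 := by
    apply mul_left_cancel₀ hm0
    linear_combination hN - (N + 2 * m ^ 6 * t) * ht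
  have hprod : (n - t) * (n + t) = 1 := by linear_combination (-1) * ht2
  obtain ⟨ht0, hn1⟩ : t = 0 ∧ (n = 1 ∨ n = -1) := by
    rcases Int.mul_eq_one_iff_eq_one_or_neg_one.mp hprod with ⟨h1, h2⟩ | ⟨h1, h2⟩ <;>
      exact ⟨by omega, by omega⟩
  rw [ht0, mul_zero] at ht
  have hm6 : m ^ 6 = 0 := by
    rw [hNdef] at ht
    rcases hn1 with h | h <;> subst h <;> linarith
  exact absurd ((pow_eq_zero_iff (by norm_num : (6 : ℕ) ≠ 0)).mp hm6) (by omega)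

open WeierstrassCurve.Affine WeierstrassCurve.Affine.Point in
lemma quartic_of_mem_double (m : ℤ) {X Y : ℚ}
    (hXY : (Em' m).toAffine.Nonsingular X Y)
    (h : WeierstrassCurve.Affine.Point.some _ _ hXY ∈ (doublingHom (Em' m).toAffine.Point).range) :
    ∃ x : ℚ, x ^ 4 - 2 * x ^ 2 + 8 * (m : ℚ) ^ 6 * x + 1
      = 4 * X * (x ^ 3 + x - (m : ℚ) ^ 6) := by
  obtain ⟨R, hR⟩ := h
  have hR' : R + R = WeierstrassCurve.Affine.Point.some _ _ hXY := by
    rw [← hR, ← two_nsmul]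
    rfl
  cases R with
  | zero => exact absurd hR'.symm (some_ne_zero hXY)
  | @some x y hxy =>
    by_cases hy : y = (Em' m).toAffine.negY x y
    · rw [add_self_of_Y_eq hy] at hR'
      exact absurd hR'.symm (some_ne_zero hXY)
    · rw [add_self_of_Y_ne hy] at hR'
      obtain ⟨hx', -⟩ := some.inj hR'
      have hy0 : y ≠ 0 := by
        intro h0
        apply hy
        simp [negY, Em', h0, WeierstrassCurve.toAffine]
      have heq : y ^ 2 = x ^ 3 + x - (m : ℚ) ^ 6 := by
        have h' := (equation_iff (W := (Em' m).toAffine) x y).mp hxy.left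
        simp only [Em', WeierstrassCurve.toAffine] at h'
        linear_combination h'
      have hslope : (Em' m).toAffine.slope x x y y = (3 * x ^ 2 + 1) / (2 * y) := by
        rw [slope_of_Y_ne rfl hy]
        simp only [negY, Em', WeierstrassCurve.toAffine]
        norm_num
        ring_nf
      rw [hslope] at hx'
      have hL : ((3 * x ^ 2 + 1) / (2 * y)) ^ 2 - x - x = X := by
        simpa [addX, Em', WeierstrassCurve.toAffine] using hx'
      have h2y : (2 * y) ≠ 0 := by simpa using hy0
      have hL2 : (3 * x ^ 2 + 1) ^ 2 = (X + 2 * x) * (4 * (x ^ 3 + x - (m : ℚ) ^ 6)) := by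
        have e1 : ((3 * x ^ 2 + 1) / (2 * y)) ^ 2 * (2 * y) ^ 2 = (3 * x ^ 2 + 1) ^ 2 := by
          field_simp
        calc (3 * x ^ 2 + 1) ^ 2 = (((3 * x ^ 2 + 1) / (2 * y)) ^ 2) * (2 * y) ^ 2 := e1.symm
          _ = (X + 2 * x) * (2 * y) ^ 2 := by rw [← hL]; ring
          _ = (X + 2 * x) * (4 * (x ^ 3 + x - (m : ℚ) ^ 6)) := by
              rw [show (2 * y) ^ 2 = 4 * y ^ 2 by ring, heq]
      exact ⟨x, by linear_combination hL2⟩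

/-- For `m > 1` with `3 ∤ m` and `m ≡ 2 (mod 4)`, neither `P' = (m², m)` nor `Q' = (m⁶, m⁹)`
on `E'_m : y² = x³ + x - m⁶` lies in `2E'_m(ℚ)`, i.e. both are nontrivial in
`E'_m(ℚ)/2E'_m(ℚ)`. -/
theorem Em'_P_Q_nontrivial_mod_two
    (m : ℤ) (hm : 1 < m) (h3 : ¬ (3 : ℤ) ∣ m) (h4 : m % 4 = 2)
    (hP : (Em' m).toAffine.Nonsingular ((m : ℚ) ^ 2) (m : ℚ))
    (hQ : (Em' m).toAffine.Nonsingular ((m : ℚ) ^ 6) ((m : ℚ) ^ 9)) :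
    WeierstrassCurve.Affine.Point.some _ _ hP ∉ (doublingHom (Em' m).toAffine.Point).range ∧
      WeierstrassCurve.Affine.Point.some _ _ hQ ∉ (doublingHom (Em' m).toAffine.Point).range := by
  constructor
  · intro hmem
    obtain ⟨x, hq⟩ := quartic_of_mem_double m hP hmem
    have h0 : x ^ 4 + ((-(4 * m ^ 2) : ℤ) : ℚ) * x ^ 3 + ((-2 : ℤ) : ℚ) * x ^ 2
        + ((8 * m ^ 6 - 4 * m ^ 2 : ℤ) : ℚ) * x + ((1 + 4 * m ^ 8 : ℤ) : ℚ) = 0 := by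
      push_cast
      linear_combination hq
    obtain ⟨n, hn⟩ := quartic_rat_root_int _ _ _ _ x h0
    rw [← hn] at h0
    have hZ' : n ^ 4 + (-(4 * m ^ 2)) * n ^ 3 + (-2) * n ^ 2 + (8 * m ^ 6 - 4 * m ^ 2) * n
        + (1 + 4 * m ^ 8) = 0 := by exact_mod_cast h0
    exact no_int_root_P m h4 n (by linear_combination hZ')
  · intro hmem
    obtain ⟨x, hq⟩ := quartic_of_mem_double m hQ hmem
    have h0 : x ^ 4 + ((-(4 * m ^ 6) : ℤ) : ℚ) * x ^ 3 + ((-2 : ℤ) : ℚ) * x ^ 2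
        + ((4 * m ^ 6 : ℤ) : ℚ) * x + ((1 + 4 * m ^ 12 : ℤ) : ℚ) = 0 := by
      push_cast
      linear_combination hq
    obtain ⟨n, hn⟩ := quartic_rat_root_int _ _ _ _ x h0
    rw [← hn] at h0
    have hZ' : n ^ 4 + (-(4 * m ^ 6)) * n ^ 3 + (-2) * n ^ 2 + 4 * m ^ 6 * n
        + (1 + 4 * m ^ 12) = 0 := by exact_mod_cast h0
    exact no_int_root_Q m hm n (by linear_combination hZ')
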